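/- arXiv:2501.18519 — 3 statements merged into one kernel-verified Lean document; each statement's English description precedes it below -/
import Mathlib

section
/- There are no integers a, b, c, d, a', b', c', d' satisfying simultaneously: 2a² + 2b² + 2ab + c² − cd = 1, and 2a'² + 2b'² + 2a'b' + c'² − c'd' = 1, and −2(2aa' + ab' + a'b + 2bb' + cc') + cd' + dc' = 1. -/
theorem no_integer_solution :
    ¬ ∃ a b c d a' b' c' d' : ℤ,
      2*a^2 + 2*b^2 + 2*a*b + c^2 - c*d = 1 ∧
      2*a'^2 + 2*b'^2 + 2*a'*b' + c'^2 - c'*d' = 1 ∧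
      -2*(2*a*a' + a*b' + a'*b + 2*b*b' + c*c') + c*d' + d*c' = 1 := by
  rintro ⟨a, b, c, d, a', b', c', d', h1, h2, h3⟩
  have g1 := congrArg (Int.cast : ℤ → ZMod 2) h1
  have g2 := congrArg (Int.cast : ℤ → ZMod 2) h2
  have g3 := congrArg (Int.cast : ℤ → ZMod 2) h3
  push_cast at g1 g2 g3
  revert g1 g2 g3
  generalize (a : ZMod 2) = A
  generalize (b : ZMod 2) = B
  generalize (c : ZMod 2) = C
  generalize (d : ZMod 2) = D
  generalize (a' : ZMod 2) = A'
  generalize (b' : ZMod 2) = B'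
  generalize (c' : ZMod 2) = C'
  generalize (d' : ZMod 2) = D'
  revert A B C D A' B' C' D'
  decide
end

section
/- Let M be the 4×4 integer matrix with rows (−4,−2,0,0), (−2,−4,0,0), (0,0,−2,1), (0,0,1,0), and define the bilinear form B(v,w) = vᵀ M w on ℤ⁴. Then there do not exist vectors v, w ∈ ℤ⁴ with B(v,v) = −2, B(w,w) = −2, and B(v,w) = 1. -/
theorem no_A2_embedding :
    let M : Matrix (Fin 4) (Fin 4) ℤ :=
      !![-4, -2, 0, 0; -2, -4, 0, 0; 0, 0, -2, 1; 0, 0, 1, 0]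
    let B : (Fin 4 → ℤ) → (Fin 4 → ℤ) → ℤ :=
      fun v w => dotProduct v (M.mulVec w)
    ¬ ∃ v w : Fin 4 → ℤ, B v v = -2 ∧ B w w = -2 ∧ B v w = 1 := by
  intro M B
  rintro ⟨v, w, hvv, hww, hvw⟩
  simp only [B, M] at hvv hww hvw
  simp [Matrix.mulVec, dotProduct, Fin.sum_univ_four,
    Matrix.vecHead, Matrix.vecTail] at hvv hww hvw
  ring_nf at hvv hww hvw
  have hv_odd : Odd (v 2 * (v 2 - v 3)) := by
    refine ⟨-(v 0 ^ 2 + v 0 * v 1 + v 1 ^ 2), ?_⟩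
    ring_nf
    linarith [hvv]
  have hw_odd : Odd (w 2 * (w 2 - w 3)) := by
    refine ⟨-(w 0 ^ 2 + w 0 * w 1 + w 1 ^ 2), ?_⟩
    ring_nf
    linarith [hww]
  obtain ⟨hv2, hv23⟩ := Int.odd_mul.mp hv_odd
  obtain ⟨hw2, hw23⟩ := Int.odd_mul.mp hw_odd
  have hv3 : Even (v 3) := (Int.odd_sub.mp hv23).mp hv2
  have hw3 : Even (w 3) := (Int.odd_sub.mp hw23).mp hw2
  obtain ⟨n, hn⟩ := hv3
  obtain ⟨n', hn'⟩ := hw3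
  have h1 : Even (1 : ℤ) := by
    refine ⟨-2 * v 0 * w 0 - v 0 * w 1 - v 1 * w 0 - 2 * v 1 * w 1
      - v 2 * w 2 + v 2 * n' + n * w 2, ?_⟩
    rw [← hvw, hn, hn']
    ring
  norm_num at h1
end

section
/- Let M be the 4×4 integer matrix with rows (−4,−2,0,0), (−2,−4,0,0), (0,0,−2,1), (0,0,1,0), and define the bilinear form B(v,w) = vᵀ M w on ℤ⁴. Then there exist vectors v₁, v₂, v₃ ∈ ℤ⁴ with B(vᵢ,vᵢ) = −2 for i = 1,2,3 and B(vᵢ,vⱼ) = 0 for all i ≠ j. -/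
theorem three_A1_embedding :
    let M : Matrix (Fin 4) (Fin 4) ℤ :=
      !![-4, -2, 0, 0; -2, -4, 0, 0; 0, 0, -2, 1; 0, 0, 1, 0]
    let B : (Fin 4 → ℤ) → (Fin 4 → ℤ) → ℤ :=
      fun v w => dotProduct v (M.mulVec w)
    ∃ v₁ v₂ v₃ : Fin 4 → ℤ,
      B v₁ v₁ = -2 ∧ B v₂ v₂ = -2 ∧ B v₃ v₃ = -2 ∧
      B v₁ v₂ = 0 ∧ B v₂ v₁ = 0 ∧ B v₁ v₃ = 0 ∧
      B v₃ v₁ = 0 ∧ B v₂ v₃ = 0 ∧ B v₃ v₂ = 0 := by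
  refine ⟨![0,0,1,0], ![1,0,1,2], ![0,1,1,2], ?_, ?_, ?_, ?_, ?_, ?_, ?_, ?_, ?_⟩ <;>
    simp [Matrix.mulVec, dotProduct, Fin.sum_univ_four] <;> decide
end
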